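/- (Restricted moment-weight inequality at a fixed point of the flow.) Let x ∈ X with μ(x) ≠ 0 and suppose ξ, η ∈ g satisfy L_xξ = L_xη = 0, [μ(x),ξ] = 0, [μ(x),η] = 0, and |ξ'|² − |η'|² > 0 for the pair (ξ,η) viewed as ζ = ξ+iη a toral generator; assume moreover that ζ + λμ(x) is a toral generator for all λ ∈ ℝ with ζ + λμ(x) ≠ 0, so that |ξ − λμ(x)|² ≥ |η|² for all λ ∈ ℝ. Then ⟨μ(x), ξ⟩² / (|ξ|² − |η|²) ≤ |μ(x)|². -/
import Mathlib


open scoped RealInnerProductSpace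

/-- (Restricted moment-weight inequality, Theorem `thm:MW1`,
Step 1.)  In the Lie algebra `g` (a real inner product space), let
`m = μ(x) ≠ 0` and let `ζ = ξ + iη` be a toral generator with `L_x^c ζ = 0`,
so that (by Lemma WEIGHT3 applied to `ζ + λ m`, which is again a toral
generator since `[m, ξ] = [m, η] = 0`) one has `|η|² < |ξ|²` and
`‖ξ − λ·m‖² ≥ ‖η‖²` for all `λ ∈ ℝ`.  Then
`⟨m, ξ⟩² / (|ξ|² − |η|²) ≤ |m|²`, i.e.
`⟨μ(x), ξ⟩² / (|ξ|² − |η|²) ≤ |μ(gx)|²`. -/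
theorem stmt_7 {g : Type*} [NormedAddCommGroup g] [InnerProductSpace ℝ g]
    (m ξ η : g) (hm : m ≠ 0)
    (hpos : ‖η‖ ^ 2 < ‖ξ‖ ^ 2)
    (htoral : ∀ lam : ℝ, ‖η‖ ^ 2 ≤ ‖ξ - lam • m‖ ^ 2) :
    ⟪m, ξ⟫ ^ 2 / (‖ξ‖ ^ 2 - ‖η‖ ^ 2) ≤ ‖m‖ ^ 2 := by
  have hm2 : (0:ℝ) < ‖m‖ ^ 2 := pow_pos (norm_pos_iff.mpr hm) 2
  set lam := ⟪m, ξ⟫ / ‖m‖ ^ 2 with hlam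
  have key := htoral lam
  have hexp : ‖ξ - lam • m‖ ^ 2 = ‖ξ‖ ^ 2 - ⟪m, ξ⟫ ^ 2 / ‖m‖ ^ 2 := by
    have h1 : ‖ξ - lam • m‖ ^ 2 =
        ‖ξ‖ ^ 2 - 2 * (lam * ⟪m, ξ⟫) + lam ^ 2 * ‖m‖ ^ 2 := by
      rw [norm_sub_sq_real, inner_smul_right, norm_smul, real_inner_comm]
      simp [mul_pow, sq_abs]
    rw [h1, hlam]
    field_simp
    ring
  rw [hexp] at key
  have h2 : ⟪m, ξ⟫ ^ 2 / ‖m‖ ^ 2 ≤ ‖ξ‖ ^ 2 - ‖η‖ ^ 2 := by linarith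
  rw [div_le_iff₀ (by linarith)]
  calc ⟪m, ξ⟫ ^ 2 = ⟪m, ξ⟫ ^ 2 / ‖m‖ ^ 2 * ‖m‖ ^ 2 := by field_simp
    _ ≤ (‖ξ‖ ^ 2 - ‖η‖ ^ 2) * ‖m‖ ^ 2 := by
        apply mul_le_mul_of_nonneg_right h2 (le_of_lt hm2)
    _ = ‖m‖ ^ 2 * (‖ξ‖ ^ 2 - ‖η‖ ^ 2) := by ring
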